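/- If g is in BMO[μ,h] and a is an [μ,h]-atom, then |∫_X a(x) g(x) dμ(x)| ≤ ‖g‖_{BMO[μ,h]}, where the integral is independent of the representative of g modulo multiples of h. -/

import Mathlib

open MeasureTheory Metric

/-- If `g ∈ BMO[μ,h]` with norm at most `M` (in the sup-inf sense) and `a` is an
`[μ,h]`-atom, then `|∫ a g dμ| ≤ M`; moreover the integral does not change when `g` is
replaced by `g + c h`. -/
theorem stmt8 {X : Type*} [MetricSpace X] [MeasurableSpace X] [BorelSpace X]
    (μ : Measure X) (h : X → ℝ) (hmeas : Measurable h) (hpos : ∀ x, 0 < h x)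
    (g : X → ℝ) (hgmeas : Measurable g) (M : ℝ) (hM : 0 ≤ M)
    (hBMO : ∀ (x : X) (r : ℝ), 0 < r → ∀ ε : ℝ, 0 < ε → ∃ c : ℝ,
      Integrable (fun y => (g y - c * h y) ^ 2 * h y) (μ.restrict (ball x r)) ∧
      ∫ y in ball x r, (g y - c * h y) ^ 2 * h y ∂μ ≤
        (M + ε) ^ 2 * ∫ y in ball x r, h y ∂μ)
    (a : X → ℝ) (hameas : Measurable a)
    (x₀ : X) (r₀ : ℝ) (hr₀ : 0 < r₀)
    (hsupp : ∀ y, y ∉ ball x₀ r₀ → a y = 0)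
    (hsize : (∫⁻ y in ball x₀ r₀, ENNReal.ofReal ((a y) ^ 2 / h y) ∂μ) *
      (∫⁻ y in ball x₀ r₀, ENNReal.ofReal (h y) ∂μ) ≤ 1)
    (hah : Integrable (fun x => a x * h x) μ)
    (hcancel : ∫ x, a x * h x ∂μ = 0)
    (hag : Integrable (fun x => a x * g x) μ) :
    |∫ x, a x * g x ∂μ| ≤ M ∧
      ∀ c : ℝ, ∫ x, a x * (g x + c * h x) ∂μ = ∫ x, a x * g x ∂μ := by
  constructor
  · -- it suffices to show |I| ≤ M + ε for every ε > 0
    refine le_of_forall_pos_le_add fun ε hε => ?_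
    obtain ⟨c, hint, hbound⟩ := hBMO x₀ r₀ hr₀ ε hε
    set B := ball x₀ r₀
    -- the integral equals ∫ a (g - c h)
    have key : ∫ x, a x * g x ∂μ = ∫ x in B, a x * (g x - c * h x) ∂μ := by
      rw [setIntegral_eq_integral_of_forall_compl_eq_zero
        (fun y hy => by rw [hsupp y hy, zero_mul])]
      have : (fun x => a x * (g x - c * h x))
          = fun x => a x * g x - c * (a x * h x) := by
        funext x; ring
      rw [this, integral_sub hag (hah.const_mul c), integral_const_mul, hcancel,
        mul_zero, sub_zero]
    set A := ∫⁻ y in B, ENNReal.ofReal ((a y) ^ 2 / h y) ∂μ with hA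
    set H := ∫⁻ y in B, ENNReal.ofReal (h y) ∂μ with hH
    -- Cauchy-Schwarz at the lintegral level
    have hCS : ∫⁻ y in B, ENNReal.ofReal (|a y * (g y - c * h y)|) ∂μ ≤
        A ^ (1/2 : ℝ) * (∫⁻ y in B, ENNReal.ofReal ((g y - c * h y) ^ 2 * h y) ∂μ) ^ (1/2 : ℝ) := by
      have hpw : ∀ y, ENNReal.ofReal (|a y * (g y - c * h y)|) =
          ENNReal.ofReal (|a y| / Real.sqrt (h y)) *
          ENNReal.ofReal (|g y - c * h y| * Real.sqrt (h y)) := by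
        intro y
        rw [← ENNReal.ofReal_mul (div_nonneg (abs_nonneg _) (Real.sqrt_nonneg _))]
        congr 1
        have hs : Real.sqrt (h y) ≠ 0 := ne_of_gt (Real.sqrt_pos.mpr (hpos y))
        have : |a y| / Real.sqrt (h y) * (|g y - c * h y| * Real.sqrt (h y))
            = |a y| * |g y - c * h y| * (Real.sqrt (h y) / Real.sqrt (h y)) := by ring
        rw [abs_mul, this, div_self hs, mul_one]
      have h1 : ∀ y, ENNReal.ofReal (|a y| / Real.sqrt (h y)) ^ (2 : ℝ) =
          ENNReal.ofReal ((a y) ^ 2 / h y) := by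
        intro y
        rw [ENNReal.ofReal_rpow_of_nonneg (by positivity) (by norm_num)]
        congr 1
        rw [show ((2:ℝ)) = ((2:ℕ):ℝ) by norm_num, Real.rpow_natCast, div_pow, sq_abs, Real.sq_sqrt (hpos y).le]
      have h2 : ∀ y, ENNReal.ofReal (|g y - c * h y| * Real.sqrt (h y)) ^ (2 : ℝ) =
          ENNReal.ofReal ((g y - c * h y) ^ 2 * h y) := by
        intro y
        rw [ENNReal.ofReal_rpow_of_nonneg (by positivity) (by norm_num)]
        congr 1
        rw [show ((2:ℝ)) = ((2:ℕ):ℝ) by norm_num, Real.rpow_natCast, mul_pow, sq_abs, Real.sq_sqrt (hpos y).le]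
      calc ∫⁻ y in B, ENNReal.ofReal (|a y * (g y - c * h y)|) ∂μ
          = ∫⁻ y in B, ENNReal.ofReal (|a y| / Real.sqrt (h y)) *
              ENNReal.ofReal (|g y - c * h y| * Real.sqrt (h y)) ∂μ := by
            exact lintegral_congr fun y => hpw y
        _ ≤ (∫⁻ y in B, ENNReal.ofReal (|a y| / Real.sqrt (h y)) ^ (2:ℝ) ∂μ) ^ (1/2 : ℝ) *
            (∫⁻ y in B, ENNReal.ofReal (|g y - c * h y| * Real.sqrt (h y)) ^ (2:ℝ) ∂μ) ^ (1/2 : ℝ) := by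
            refine ENNReal.lintegral_mul_le_Lp_mul_Lq _ (by constructor <;> norm_num) ?_ ?_
            · exact (ENNReal.measurable_ofReal.comp
                ((hameas.abs.div (hmeas.sqrt)))).aemeasurable
            · exact (ENNReal.measurable_ofReal.comp
                (((hgmeas.sub (hmeas.const_mul c)).abs.mul hmeas.sqrt))).aemeasurable
        _ = A ^ (1/2 : ℝ) *
            (∫⁻ y in B, ENNReal.ofReal ((g y - c * h y) ^ 2 * h y) ∂μ) ^ (1/2 : ℝ) := by
            rw [lintegral_congr fun y => h1 y, lintegral_congr fun y => h2 y]
    -- bound the second factor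
    have hGle : (∫⁻ y in B, ENNReal.ofReal ((g y - c * h y) ^ 2 * h y) ∂μ) ≤
        ENNReal.ofReal ((M + ε) ^ 2) * H := by
      rw [← ofReal_integral_eq_lintegral_ofReal hint
        (Filter.Eventually.of_forall fun y => mul_nonneg (sq_nonneg _) (hpos y).le)]
      calc ENNReal.ofReal (∫ y in B, (g y - c * h y) ^ 2 * h y ∂μ)
          ≤ ENNReal.ofReal ((M + ε) ^ 2 * ∫ y in B, h y ∂μ) := ENNReal.ofReal_le_ofReal hbound
        _ = ENNReal.ofReal ((M + ε) ^ 2) * ENNReal.ofReal (∫ y in B, h y ∂μ) :=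
            ENNReal.ofReal_mul (sq_nonneg _)
        _ ≤ ENNReal.ofReal ((M + ε) ^ 2) * H := by
            gcongr
            rw [integral_eq_lintegral_of_nonneg_ae
              (Filter.Eventually.of_forall fun y => (hpos y).le)
              hmeas.aestronglyMeasurable]
            exact ENNReal.ofReal_toReal_le
    -- combine
    have hfinal : ∫⁻ y in B, ENNReal.ofReal (|a y * (g y - c * h y)|) ∂μ ≤
        ENNReal.ofReal (M + ε) := by
      calc ∫⁻ y in B, ENNReal.ofReal (|a y * (g y - c * h y)|) ∂μ
          ≤ A ^ (1/2 : ℝ) * (ENNReal.ofReal ((M + ε) ^ 2) * H) ^ (1/2 : ℝ) := by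
            refine hCS.trans ?_
            gcongr
        _ = (A * H) ^ (1/2 : ℝ) * ENNReal.ofReal ((M + ε) ^ 2) ^ (1/2 : ℝ) := by
            rw [ENNReal.mul_rpow_of_nonneg _ _ (by norm_num),
              ENNReal.mul_rpow_of_nonneg _ _ (by norm_num)]
            ring
        _ ≤ 1 ^ (1/2 : ℝ) * ENNReal.ofReal ((M + ε) ^ 2) ^ (1/2 : ℝ) := by
            gcongr
        _ = ENNReal.ofReal (M + ε) := by
            rw [ENNReal.one_rpow, one_mul,
              ENNReal.ofReal_rpow_of_nonneg (by positivity) (by norm_num)]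
            congr 1
            rw [← Real.rpow_natCast (M + ε) 2, ← Real.rpow_mul (by positivity)]
            norm_num
    have key2 : |∫ x, a x * g x ∂μ| ≤ ∫ y in B, |a y * (g y - c * h y)| ∂μ := by
      rw [key]
      have := norm_integral_le_integral_norm (μ := μ.restrict B)
        (f := fun y => a y * (g y - c * h y))
      simpa [Real.norm_eq_abs, abs_mul] using this
    refine key2.trans ?_
    rw [integral_eq_lintegral_of_nonneg_ae (f := fun y => |a y * (g y - c * h y)|)
      (Filter.Eventually.of_forall fun y => abs_nonneg _)
      ((hameas.mul (hgmeas.sub (hmeas.const_mul c))).abs).aestronglyMeasurable]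
    calc (∫⁻ y in B, ENNReal.ofReal (|a y * (g y - c * h y)|) ∂μ).toReal
        ≤ (ENNReal.ofReal (M + ε)).toReal :=
          ENNReal.toReal_mono ENNReal.ofReal_ne_top hfinal
      _ = M + ε := ENNReal.toReal_ofReal (by positivity)
  · intro c
    have : (fun x => a x * (g x + c * h x))
        = fun x => a x * g x + c * (a x * h x) := by
      funext x; ring
    rw [this, integral_add hag (hah.const_mul c), integral_const_mul, hcancel,
      mul_zero, add_zero]
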